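/- Let (m, m') be a pair of distinct standard Young tableaux of the same shape λ with n boxes, and suppose (m, m') is a bridge pair with cut ī (the minimal index where their axial distances differ). Then the pair (g_ī(m), g_ī(m')) has cut ī − 1, i.e., applying the swap at the cut strictly decreases the cut. Consequently, iterating this operation from any bridge pair eventually produces a crossing pair. -/

import Mathlib

open Finset
open scoped Classical

/-- A filling `pos : Fin n → ℕ × ℕ` (the cell, as `(row, column)`, containing entry `k+1`)
is a standard Young tableau iff it is injective and every prefix of cells forms a
Young diagram. -/
def IsSYTFun (n : ℕ) (pos : Fin n → ℕ × ℕ) : Prop :=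
  Function.Injective pos ∧
    ∀ k : Fin n, ∃ Y : YoungDiagram,
      Y.cells = (Finset.univ.filter (fun j => j ≤ k)).image pos

/-- A standard Young tableau with `n` boxes. -/
structure SYT (n : ℕ) where
  pos : Fin n → ℕ × ℕ
  isSYT : IsSYTFun n pos

/-- The content (column minus row) of a cell. -/
def cellContent (p : ℕ × ℕ) : ℤ := (p.2 : ℤ) - (p.1 : ℤ)

/-- The axial distance `d_i(m)` between the entries `i` and `i+1` of `m`
(content of the cell of `i+1` minus content of the cell of `i`); `0` when `i`
is out of range. -/
def SYT.d {n : ℕ} (m : SYT n) (i : ℕ) : ℤ :=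
  if h : 0 < i ∧ i < n then
    cellContent (m.pos ⟨i, h.2⟩) -
      cellContent (m.pos ⟨i - 1, Nat.lt_of_le_of_lt (Nat.sub_le i 1) h.2⟩)
  else 0

/-- The shape of a standard Young tableau, as a finite set of cells. -/
def SYT.shape {n : ℕ} (m : SYT n) : Finset (ℕ × ℕ) := Finset.univ.image m.pos

/-- `g_i(m)`: the tableau obtained from `m` by exchanging the entries `i` and `i+1`,
if this again yields a standard Young tableau, and `m` otherwise. -/
noncomputable def SYT.g {n : ℕ} (m : SYT n) (i : ℕ) : SYT n :=
  if h : ∃ h' : 0 < i ∧ i < n,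
      IsSYTFun n (m.pos ∘ Equiv.swap
        (⟨i - 1, Nat.lt_of_le_of_lt (Nat.sub_le i 1) h'.2⟩ : Fin n) ⟨i, h'.2⟩) then
    ⟨_, h.choose_spec⟩
  else m

/-- `(m, m')` is a crossing pair: for some `i` the axial distances differ and the
swaps `g_i` act on both tableaux either both nontrivially or both trivially. -/
def Crossing {n : ℕ} (m m' : SYT n) : Prop :=
  ∃ i : ℕ, 0 < i ∧ i < n ∧ m.d i ≠ m'.d i ∧
    ((|m.d i| ≠ 1 ∧ |m'.d i| ≠ 1) ∨ (|m.d i| = 1 ∧ |m'.d i| = 1))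


namespace SYT
variable {n : ℕ}

def pref (m : SYT n) (k : Fin n) : Finset (ℕ × ℕ) :=
  (Finset.univ.filter (fun j => j ≤ k)).image m.pos

lemma pos_inj (m : SYT n) : Function.Injective m.pos := m.isSYT.1

lemma mem_pref {m : SYT n} {k : Fin n} {c : ℕ × ℕ} :
    c ∈ m.pref k ↔ ∃ j, j ≤ k ∧ m.pos j = c := by
  simp [pref]

lemma pos_mem_pref {m : SYT n} {k j : Fin n} (h : j ≤ k) : m.pos j ∈ m.pref k :=
  mem_pref.2 ⟨j, h, rfl⟩

lemma pref_lower (m : SYT n) (k : Fin n) : IsLowerSet ((m.pref k : Finset (ℕ × ℕ)) : Set (ℕ × ℕ)) := by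
  obtain ⟨Y, hY⟩ := m.isSYT.2 k
  have h : m.pref k = Y.cells := hY.symm
  rw [h]
  exact Y.isLowerSet

lemma le_of_pos_le {m : SYT n} {a b : Fin n} (h : m.pos a ≤ m.pos b) : a ≤ b := by
  have h1 : m.pos a ∈ m.pref b := m.pref_lower b h (pos_mem_pref le_rfl)
  obtain ⟨j, hj, hje⟩ := mem_pref.1 h1
  rwa [← m.pos_inj hje]

/-- Any cell between `pos j` and `pos ⟨j+1⟩` (≤ the latter, ≥ the former, ≠ the former)
must equal `pos ⟨j+1⟩`. -/
lemma eq_next {m : SYT n} {j : Fin n} (hj : (j : ℕ) + 1 < n) {c : ℕ × ℕ}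
    (h1 : c ≤ m.pos ⟨(j : ℕ) + 1, hj⟩) (h2 : m.pos j ≤ c) (h3 : c ≠ m.pos j) :
    c = m.pos ⟨(j : ℕ) + 1, hj⟩ := by
  have hmem : c ∈ m.pref ⟨(j : ℕ) + 1, hj⟩ :=
    m.pref_lower _ h1 (pos_mem_pref le_rfl)
  obtain ⟨j', hj', hje⟩ := mem_pref.1 hmem
  have hle : j ≤ j' := le_of_pos_le (by rw [hje]; exact h2)
  have hne : j' ≠ j := fun e => h3 (by rw [← hje, e])
  have : j' = ⟨(j : ℕ) + 1, hj⟩ := by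
    apply Fin.ext
    have hv1 : (j : ℕ) ≤ (j' : ℕ) := hle
    have hv2 : (j' : ℕ) ≤ (j : ℕ) + 1 := hj'
    have hv3 : (j' : ℕ) ≠ (j : ℕ) := fun e => hne (Fin.ext e)
    simp only [Fin.val_mk]
    omega
  rw [← this, hje]

/-- If consecutive entries sit in comparable cells, they are adjacent. -/
lemma adj_of_le {m : SYT n} {j : Fin n} (hj : (j : ℕ) + 1 < n)
    (hle : m.pos j ≤ m.pos ⟨(j : ℕ) + 1, hj⟩) :
    m.pos ⟨(j : ℕ) + 1, hj⟩ = ((m.pos j).1, (m.pos j).2 + 1) ∨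
    m.pos ⟨(j : ℕ) + 1, hj⟩ = ((m.pos j).1 + 1, (m.pos j).2) := by
  set p := m.pos j with hp
  set q := m.pos ⟨(j : ℕ) + 1, hj⟩ with hq
  have hjj : j ≠ ⟨(j : ℕ) + 1, hj⟩ := by
    intro e
    have : (j : ℕ) = (j : ℕ) + 1 := congrArg Fin.val e
    omega
  have hpq : p ≠ q := fun e => hjj (m.pos_inj e)
  have h1 : p.1 ≤ q.1 := hle.1
  have h2 : p.2 ≤ q.2 := hle.2
  rcases Nat.eq_or_lt_of_le h1 with he1 | hl1
  · have h2' : p.2 < q.2 := by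
      rcases Nat.eq_or_lt_of_le h2 with he2 | hl2
      · exact absurd (Prod.ext he1 he2) hpq
      · exact hl2
    left
    exact (eq_next hj (c := (p.1, p.2 + 1))
      (Prod.mk_le_mk.2 ⟨he1.le, h2'⟩) (Prod.mk_le_mk.2 ⟨le_rfl, Nat.le_succ _⟩)
      (by simp [Prod.ext_iff, hp])).symm
  · right
    exact (eq_next hj (c := (p.1 + 1, p.2))
      (Prod.mk_le_mk.2 ⟨hl1, h2⟩) (Prod.mk_le_mk.2 ⟨Nat.le_succ _, le_rfl⟩)
      (by simp [Prod.ext_iff, hp])).symm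

/-- the four-way classification of positions of consecutive entries -/
lemma classify {m : SYT n} {j : Fin n} (hj : (j : ℕ) + 1 < n) :
    m.pos ⟨(j : ℕ) + 1, hj⟩ = ((m.pos j).1, (m.pos j).2 + 1) ∨
    m.pos ⟨(j : ℕ) + 1, hj⟩ = ((m.pos j).1 + 1, (m.pos j).2) ∨
    2 ≤ cellContent (m.pos ⟨(j : ℕ) + 1, hj⟩) - cellContent (m.pos j) ∨
    cellContent (m.pos ⟨(j : ℕ) + 1, hj⟩) - cellContent (m.pos j) ≤ -2 := by
  set p := m.pos j with hp
  set q := m.pos ⟨(j : ℕ) + 1, hj⟩ with hq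
  -- helper: no cell of pref j can be ≥ q
  have key : ∀ c : ℕ × ℕ, c ≤ p → q ≤ c → False := by
    intro c hcp hqc
    have hmem : c ∈ m.pref j := m.pref_lower j hcp (pos_mem_pref le_rfl)
    obtain ⟨j', hj', hje⟩ := mem_pref.1 hmem
    have hv1 : (j : ℕ) + 1 ≤ (j' : ℕ) :=
      le_of_pos_le (a := ⟨(j : ℕ) + 1, hj⟩) (by rw [hje]; exact hqc)
    have hv2 : (j' : ℕ) ≤ (j : ℕ) := hj'
    omega
  rcases le_or_gt p.1 q.1 with h1 | h1
  · rcases le_or_gt p.2 q.2 with h2 | h2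
    · rcases adj_of_le hj (Prod.mk_le_mk.2 ⟨h1, h2⟩) with h | h
      · exact Or.inl h
      · exact Or.inr (Or.inl h)
    · have hl1 : p.1 < q.1 := by
        rcases Nat.eq_or_lt_of_le h1 with he1 | hl1
        · exact absurd (key (q.1, p.2) (Prod.mk_le_mk.2 ⟨he1.ge, le_rfl⟩)
            (Prod.mk_le_mk.2 ⟨le_rfl, h2.le⟩)) (by simp)
        · exact hl1
      right; right; right
      simp only [cellContent]
      omega
  · have hl2 : p.2 < q.2 := by
      rcases lt_or_ge p.2 q.2 with h | h
      · exact h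
      · exact absurd (key (q.1, p.2) (Prod.mk_le_mk.2 ⟨h1.le, le_rfl⟩)
          (Prod.mk_le_mk.2 ⟨le_rfl, h⟩)) (by simp)
    right; right; left
    simp only [cellContent]
    omega

lemma d_eq {m : SYT n} {i : ℕ} (h0 : 0 < i) (hn : i < n) :
    m.d i = cellContent (m.pos ⟨i, hn⟩) -
      cellContent (m.pos ⟨i - 1, Nat.lt_of_le_of_lt (Nat.sub_le i 1) hn⟩) := by
  rw [SYT.d, dif_pos ⟨h0, hn⟩]

section Classify

variable {m : SYT n} {i : ℕ}

private lemma hj_aux (h0 : 0 < i) (hn : i < n) :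
    ((⟨i - 1, Nat.lt_of_le_of_lt (Nat.sub_le i 1) hn⟩ : Fin n) : ℕ) + 1 < n := by
  simp only [Fin.val_mk]; omega

private lemma hfin_aux (h0 : 0 < i) (hn : i < n) :
    (⟨((⟨i - 1, Nat.lt_of_le_of_lt (Nat.sub_le i 1) hn⟩ : Fin n) : ℕ) + 1, hj_aux h0 hn⟩ : Fin n)
      = ⟨i, hn⟩ := Fin.ext (by simp only [Fin.val_mk]; omega)

lemma classify' (h0 : 0 < i) (hn : i < n) :
    m.pos ⟨i, hn⟩ = ((m.pos ⟨i - 1, Nat.lt_of_le_of_lt (Nat.sub_le i 1) hn⟩).1,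
        (m.pos ⟨i - 1, Nat.lt_of_le_of_lt (Nat.sub_le i 1) hn⟩).2 + 1) ∨
    m.pos ⟨i, hn⟩ = ((m.pos ⟨i - 1, Nat.lt_of_le_of_lt (Nat.sub_le i 1) hn⟩).1 + 1,
        (m.pos ⟨i - 1, Nat.lt_of_le_of_lt (Nat.sub_le i 1) hn⟩).2) ∨
    2 ≤ m.d i ∨ m.d i ≤ -2 := by
  have hcl := classify (m := m) (hj_aux (i := i) h0 hn)
  rw [hfin_aux h0 hn] at hcl
  rw [d_eq h0 hn]
  exact hcl

lemma d_ne_zero (h0 : 0 < i) (hn : i < n) : m.d i ≠ 0 := by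
  rcases classify' (m := m) h0 hn with h | h | h | h
  · rw [d_eq h0 hn, h]; simp [cellContent]
  · rw [d_eq h0 hn, h]; simp only [cellContent]; push_cast; intro hc; omega
  · omega
  · omega

lemma d_right (h0 : 0 < i) (hn : i < n) (hd : m.d i = 1) :
    m.pos ⟨i, hn⟩ = ((m.pos ⟨i - 1, Nat.lt_of_le_of_lt (Nat.sub_le i 1) hn⟩).1,
        (m.pos ⟨i - 1, Nat.lt_of_le_of_lt (Nat.sub_le i 1) hn⟩).2 + 1) := by
  rcases classify' (m := m) h0 hn with h | h | h | h
  · exact h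
  · exfalso
    rw [d_eq h0 hn, h] at hd
    simp only [cellContent] at hd; push_cast at hd; omega
  · omega
  · omega

lemma d_down (h0 : 0 < i) (hn : i < n) (hd : m.d i = -1) :
    m.pos ⟨i, hn⟩ = ((m.pos ⟨i - 1, Nat.lt_of_le_of_lt (Nat.sub_le i 1) hn⟩).1 + 1,
        (m.pos ⟨i - 1, Nat.lt_of_le_of_lt (Nat.sub_le i 1) hn⟩).2) := by
  rcases classify' (m := m) h0 hn with h | h | h | h
  · exfalso
    rw [d_eq h0 hn, h] at hd
    simp only [cellContent] at hd; push_cast at hd; omega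
  · exact h
  · omega
  · omega

lemma abs_d_ne_one (h0 : 0 < i) (hn : i < n) (hd : |m.d i| ≠ 1) : 2 ≤ |m.d i| := by
  have h1 := d_ne_zero (m := m) h0 hn
  rcases abs_cases (m.d i) with ⟨h, _⟩ | ⟨h, _⟩ <;> omega

end Classify

/-- `d 1` always has absolute value one. -/
lemma abs_d_one (m : SYT n) (hn : 1 < n) : |m.d 1| = 1 := by
  have hz : (0 : ℕ) < n := by omega
  have h0 : m.pos ⟨0, hz⟩ = (0, 0) := by
    have hmem : m.pos ⟨0, hz⟩ ∈ m.pref ⟨0, hz⟩ := pos_mem_pref le_rfl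
    have h00 : ((0, 0) : ℕ × ℕ) ∈ m.pref ⟨0, hz⟩ :=
      m.pref_lower _ (Prod.mk_le_mk.2 ⟨Nat.zero_le _, Nat.zero_le _⟩) hmem
    obtain ⟨j, hj, hje⟩ := mem_pref.1 h00
    have hjv : (j : ℕ) ≤ 0 := hj
    have : j = ⟨0, hz⟩ := Fin.ext (by simp only [Fin.val_mk]; omega)
    rw [← hje, this]
  have hp0 : (⟨1 - 1, Nat.lt_of_le_of_lt (Nat.sub_le 1 1) hn⟩ : Fin n) = ⟨0, hz⟩ :=
    Fin.ext (by simp)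
  have hle : m.pos ⟨1 - 1, Nat.lt_of_le_of_lt (Nat.sub_le 1 1) hn⟩ ≤ m.pos ⟨1, hn⟩ := by
    rw [hp0, h0]; exact Prod.mk_le_mk.2 ⟨Nat.zero_le _, Nat.zero_le _⟩
  have hj : ((⟨1 - 1, Nat.lt_of_le_of_lt (Nat.sub_le 1 1) hn⟩ : Fin n) : ℕ) + 1 < n := by
    simpa using hn
  have hfin : (⟨((⟨1 - 1, Nat.lt_of_le_of_lt (Nat.sub_le 1 1) hn⟩ : Fin n) : ℕ) + 1, hj⟩ : Fin n)
      = ⟨1, hn⟩ := Fin.ext (by simp)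
  have hadj := adj_of_le (m := m) hj (by rw [hfin]; exact hle)
  rw [hfin] at hadj
  rw [d_eq one_pos hn]
  rcases hadj with h | h
  · rw [h]; simp [cellContent]
  · rw [h]; simp only [cellContent]; push_cast; rw [abs_eq (by norm_num)]; right; ring


/-- when `|d i| ≠ 1`, the cells of entries `i`, `i+1` are incomparable. -/
lemma not_le_of_abs_ne_one {m : SYT n} {i : ℕ} (h0 : 0 < i) (hn : i < n) (hd : |m.d i| ≠ 1) :
    ¬ (m.pos ⟨i - 1, Nat.lt_of_le_of_lt (Nat.sub_le i 1) hn⟩ ≤ m.pos ⟨i, hn⟩) := by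
  intro hle
  have hadj := adj_of_le (m := m) (hj_aux (i := i) h0 hn)
    (by rw [hfin_aux h0 hn]; exact hle)
  rw [hfin_aux h0 hn] at hadj
  apply hd
  rw [abs_eq (by norm_num : (0:ℤ) ≤ 1)]
  rcases hadj with h | h
  · left
    rw [d_eq h0 hn, h]
    simp only [cellContent]
    push_cast
    ring
  · right
    rw [d_eq h0 hn, h]
    simp only [cellContent]
    push_cast
    ring

section G

variable {m : SYT n} {i : ℕ}

/-- the swapped filling is standard when `|d i| ≠ 1`. -/
lemma swap_std (h0 : 0 < i) (hn : i < n) (hd : |m.d i| ≠ 1) :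
    IsSYTFun n (m.pos ∘ Equiv.swap
      (⟨i - 1, Nat.lt_of_le_of_lt (Nat.sub_le i 1) hn⟩ : Fin n) ⟨i, hn⟩) := by
  set a : Fin n := ⟨i - 1, Nat.lt_of_le_of_lt (Nat.sub_le i 1) hn⟩ with ha
  set b : Fin n := ⟨i, hn⟩ with hb
  have hav : (a : ℕ) = i - 1 := rfl
  have hbv : (b : ℕ) = i := rfl
  constructor
  · exact m.pos_inj.comp (Equiv.swap a b).injective
  intro k
  by_cases hk : k = a
  · subst hk
    -- the image is (pref b).erase p
    set p := m.pos a with hp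
    refine ⟨⟨(m.pref b).erase p, ?_⟩, ?_⟩
    · -- lower set
      intro x y hxy hy
      simp only [Finset.coe_erase, Set.mem_diff, Finset.mem_coe, Set.mem_singleton_iff] at hy ⊢
      obtain ⟨hy1, hy2⟩ := hy
      refine ⟨m.pref_lower b hxy hy1, ?_⟩
      intro hxp
      subst hxp
      -- p ≤ y, y ∈ pref b, y ≠ p
      obtain ⟨j', hj', hje⟩ := mem_pref.1 hy1
      have hle1 : a ≤ j' := le_of_pos_le (by rw [hje]; exact hxy)
      have hv1 : i - 1 ≤ (j' : ℕ) := hle1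
      have hv2 : (j' : ℕ) ≤ i := hj'
      have : j' = a ∨ j' = b := by
        rcases Nat.eq_or_lt_of_le hv1 with h | h
        · exact Or.inl (Fin.ext (by omega))
        · exact Or.inr (Fin.ext (by omega))
      rcases this with rfl | rfl
      · exact hy2 (by rw [← hje])
      · exact not_le_of_abs_ne_one h0 hn hd (by rw [hje]; exact hxy)
    · -- cells equation
      have hab : a ≠ b := by
        intro e
        have : (a : ℕ) = (b : ℕ) := congrArg Fin.val e
        omega
      have hchar : ∀ y : Fin n, y ≤ a ↔
          (Equiv.swap a b y ≤ b ∧ Equiv.swap a b y ≠ a) := by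
        intro y
        rcases eq_or_ne y a with rfl | hya
        · rw [Equiv.swap_apply_left]
          exact ⟨fun _ => ⟨le_rfl, hab.symm⟩, fun _ => le_rfl⟩
        · rcases eq_or_ne y b with rfl | hyb
          · rw [Equiv.swap_apply_right]
            constructor
            · intro h
              have h' : (i : ℕ) ≤ i - 1 := h
              omega
            · rintro ⟨-, h⟩
              exact absurd rfl h
          · rw [Equiv.swap_apply_of_ne_of_ne hya hyb]
            have hv3 : (y : ℕ) ≠ i - 1 := fun e => hya (Fin.ext e)
            have hv4 : (y : ℕ) ≠ i := fun e => hyb (Fin.ext e)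
            constructor
            · intro h
              have h' : (y : ℕ) ≤ i - 1 := h
              exact ⟨show (y : ℕ) ≤ i by omega, hya⟩
            · rintro ⟨h, -⟩
              have h' : (y : ℕ) ≤ i := h
              show (y : ℕ) ≤ i - 1
              omega
      show _ = (Finset.univ.filter (fun j => j ≤ a)).image (m.pos ∘ Equiv.swap a b)
      rw [← Finset.image_image (g := m.pos) (f := Equiv.swap a b)]
      have himg : (Finset.univ.filter (fun j => j ≤ a)).image (Equiv.swap a b)
          = (Finset.univ.filter (fun j => j ≤ b)).erase a := by
        ext x
        simp only [Finset.mem_image, Finset.mem_filter, Finset.mem_univ, true_and,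
          Finset.mem_erase]
        constructor
        · rintro ⟨y, hy, rfl⟩
          exact ((hchar y).1 hy).symm
        · rintro ⟨hxa, hxb⟩
          refine ⟨Equiv.swap a b x, ?_, Equiv.swap_apply_self _ _ _⟩
          rw [hchar (Equiv.swap a b x), Equiv.swap_apply_self]
          exact ⟨hxb, hxa⟩
      rw [himg, Finset.image_erase m.pos_inj]
      rfl
  · -- k ≠ a : image unchanged
    obtain ⟨Y, hY⟩ := m.isSYT.2 k
    refine ⟨Y, ?_⟩
    rw [hY]
    rw [← Finset.image_image (g := m.pos) (f := Equiv.swap a b)]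
    congr 1
    have hkv : (k : ℕ) ≠ i - 1 := fun e => hk (Fin.ext e)
    have hchar : ∀ y : Fin n, y ≤ k ↔ Equiv.swap a b y ≤ k := by
      intro y
      rcases eq_or_ne y a with rfl | hya
      · rw [Equiv.swap_apply_left]
        show (i - 1 : ℕ) ≤ (k : ℕ) ↔ (i : ℕ) ≤ (k : ℕ)
        omega
      · rcases eq_or_ne y b with rfl | hyb
        · rw [Equiv.swap_apply_right]
          show (i : ℕ) ≤ (k : ℕ) ↔ (i - 1 : ℕ) ≤ (k : ℕ)
          omega
        · rw [Equiv.swap_apply_of_ne_of_ne hya hyb]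
    have hkv : (k : ℕ) ≠ i - 1 := fun e => hk (Fin.ext e)
    have hchar : ∀ y : Fin n, y ≤ k ↔ Equiv.swap a b y ≤ k := by
      intro y
      rcases eq_or_ne y a with rfl | hya
      · rw [Equiv.swap_apply_left]
        show (i - 1 : ℕ) ≤ (k : ℕ) ↔ (i : ℕ) ≤ (k : ℕ)
        omega
      · rcases eq_or_ne y b with rfl | hyb
        · rw [Equiv.swap_apply_right]
          show (i : ℕ) ≤ (k : ℕ) ↔ (i - 1 : ℕ) ≤ (k : ℕ)
          omega
        · rw [Equiv.swap_apply_of_ne_of_ne hya hyb]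
    ext x
    simp only [Finset.mem_image, Finset.mem_filter, Finset.mem_univ, true_and]
    constructor
    · intro hx
      refine ⟨Equiv.swap a b x, ?_, Equiv.swap_apply_self _ _ _⟩
      rw [hchar (Equiv.swap a b x), Equiv.swap_apply_self]
      exact hx
    · rintro ⟨y, hy, rfl⟩
      rw [← hchar]
      exact hy

lemma g_pos (h0 : 0 < i) (hn : i < n) (hd : |m.d i| ≠ 1) :
    (m.g i).pos = m.pos ∘ Equiv.swap
      (⟨i - 1, Nat.lt_of_le_of_lt (Nat.sub_le i 1) hn⟩ : Fin n) ⟨i, hn⟩ := by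
  have hex : ∃ h' : 0 < i ∧ i < n,
      IsSYTFun n (m.pos ∘ Equiv.swap
        (⟨i - 1, Nat.lt_of_le_of_lt (Nat.sub_le i 1) h'.2⟩ : Fin n) ⟨i, h'.2⟩) :=
    ⟨⟨h0, hn⟩, swap_std h0 hn hd⟩
  rw [SYT.g, dif_pos hex]

lemma g_eq_self (h0 : 0 < i) (hn : i < n) (hd : |m.d i| = 1) :
    m.g i = m := by
  rw [SYT.g, dif_neg]
  rintro ⟨h', hstd⟩
  set a : Fin n := ⟨i - 1, Nat.lt_of_le_of_lt (Nat.sub_le i 1) hn⟩ with ha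
  set b : Fin n := ⟨i, hn⟩ with hb
  have hstd' : IsSYTFun n (m.pos ∘ Equiv.swap a b) := hstd
  obtain ⟨Y, hY⟩ := hstd'.2 a
  have hq : m.pos b ∈ Y.cells := by
    rw [hY]
    refine Finset.mem_image.2 ⟨a, ?_, ?_⟩
    · simp
    · simp [Equiv.swap_apply_left]
  -- p ≤ q
  have hple : m.pos a ≤ m.pos b := by
    rcases abs_eq (by norm_num : (0:ℤ) ≤ 1) |>.1 hd with h | h
    · rw [d_right h0 hn h]
      exact Prod.mk_le_mk.2 ⟨le_rfl, Nat.le_succ _⟩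
    · rw [d_down h0 hn h]
      exact Prod.mk_le_mk.2 ⟨Nat.le_succ _, le_rfl⟩
  have hp : m.pos a ∈ Y.cells := Y.isLowerSet hple hq
  rw [hY] at hp
  obtain ⟨j', hj', hje⟩ := Finset.mem_image.1 hp
  simp only [Finset.mem_filter, Finset.mem_univ, true_and] at hj'
  have : Equiv.swap a b j' = a := m.pos_inj hje
  have hj'b : j' = b := by
    have := congrArg (Equiv.swap a b) this
    rwa [Equiv.swap_apply_self, Equiv.swap_apply_left] at this
  rw [hj'b] at hj'
  have : (i : ℕ) ≤ i - 1 := hj'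
  omega

lemma g_d_pred (h2 : 2 ≤ i) (hn : i < n) (hd : |m.d i| ≠ 1) :
    (m.g i).d (i - 1) = m.d (i - 1) + m.d i := by
  have h0 : 0 < i := by omega
  have h0' : 0 < i - 1 := by omega
  have hn' : i - 1 < n := by omega
  rw [d_eq (m := m.g i) h0' hn', g_pos h0 hn hd,
    d_eq (m := m) h0' hn', d_eq (m := m) h0 hn]
  simp only [Function.comp_apply]
  have e1 : Equiv.swap (⟨i - 1, Nat.lt_of_le_of_lt (Nat.sub_le i 1) hn⟩ : Fin n) ⟨i, hn⟩
      (⟨i - 1, hn'⟩ : Fin n) = ⟨i, hn⟩ := by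
    have h : (⟨i - 1, hn'⟩ : Fin n) = ⟨i - 1, Nat.lt_of_le_of_lt (Nat.sub_le i 1) hn⟩ := rfl
    rw [h, Equiv.swap_apply_left]
  have e2 : Equiv.swap (⟨i - 1, Nat.lt_of_le_of_lt (Nat.sub_le i 1) hn⟩ : Fin n) ⟨i, hn⟩
      (⟨i - 1 - 1, Nat.lt_of_le_of_lt (Nat.sub_le (i - 1) 1) hn'⟩ : Fin n)
      = ⟨i - 1 - 1, Nat.lt_of_le_of_lt (Nat.sub_le (i - 1) 1) hn'⟩ := by
    refine Equiv.swap_apply_of_ne_of_ne ?_ ?_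
    · exact Fin.ne_of_val_ne (by simp only [Fin.val_mk]; omega)
    · exact Fin.ne_of_val_ne (by simp only [Fin.val_mk]; omega)
  rw [e1, e2]
  ring

lemma g_d_small {j : ℕ} (h0 : 0 < i) (hn : i < n) (hd : |m.d i| ≠ 1) (hj : j < i - 1) :
    (m.g i).d j = m.d j := by
  by_cases hjn : 0 < j ∧ j < n
  · rw [d_eq (m := m.g i) hjn.1 hjn.2, g_pos h0 hn hd, d_eq (m := m) hjn.1 hjn.2]
    simp only [Function.comp_apply]
    have e1 : Equiv.swap (⟨i - 1, Nat.lt_of_le_of_lt (Nat.sub_le i 1) hn⟩ : Fin n) ⟨i, hn⟩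
        (⟨j, hjn.2⟩ : Fin n) = ⟨j, hjn.2⟩ :=
      Equiv.swap_apply_of_ne_of_ne
        (Fin.ne_of_val_ne (by simp only [Fin.val_mk]; omega))
        (Fin.ne_of_val_ne (by simp only [Fin.val_mk]; omega))
    have e2 : Equiv.swap (⟨i - 1, Nat.lt_of_le_of_lt (Nat.sub_le i 1) hn⟩ : Fin n) ⟨i, hn⟩
        (⟨j - 1, Nat.lt_of_le_of_lt (Nat.sub_le j 1) hjn.2⟩ : Fin n)
        = ⟨j - 1, Nat.lt_of_le_of_lt (Nat.sub_le j 1) hjn.2⟩ :=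
      Equiv.swap_apply_of_ne_of_ne
        (Fin.ne_of_val_ne (by simp only [Fin.val_mk]; omega))
        (Fin.ne_of_val_ne (by simp only [Fin.val_mk]; omega))
    rw [e1, e2]
  · rw [SYT.d, SYT.d, dif_neg hjn, dif_neg hjn]

end G
end SYT



namespace SYT
variable {n : ℕ}

lemma crossing_symm {m m' : SYT n} (h : Crossing m m') : Crossing m' m := by
  obtain ⟨i, h1, h2, h3, h4⟩ := h
  exact ⟨i, h1, h2, h3.symm, h4.imp And.symm And.symm⟩

lemma step {m m' : SYT n} {i : ℕ} (h0 : 0 < i) (hn : i < n)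
    (hm : |m.d i| ≠ 1) (hm' : |m'.d i| = 1) (hmin : ∀ j < i, m.d j = m'.d j) :
    2 ≤ i ∧ ((m.g i).d (i - 1) ≠ (m'.g i).d (i - 1)) ∧
      ∀ j < i - 1, (m.g i).d j = (m'.g i).d j := by
  have h2 : 2 ≤ i := by
    by_contra h
    have : i = 1 := by omega
    subst this
    exact hm (abs_d_one m hn)
  have hg' : m'.g i = m' := g_eq_self h0 hn hm'
  refine ⟨h2, ?_, ?_⟩
  · rw [g_d_pred h2 hn hm, hg']
    have hmm : m.d (i - 1) = m'.d (i - 1) := hmin (i - 1) (by omega)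
    have hne := d_ne_zero (m := m) h0 hn
    omega
  · intro j hj
    rw [g_d_small h0 hn hm hj, hg']
    exact hmin j (by omega)

lemma foldl_shift (ic k : ℕ) (t : SYT n) :
    (List.range (k + 1)).foldl (fun t j => t.g (ic - j)) t
      = (List.range k).foldl (fun t j => t.g (ic - 1 - j)) (t.g ic) := by
  rw [List.range_succ_eq_map, List.foldl_cons, List.foldl_map]
  have hf : (fun (t : SYT n) (j : ℕ) => t.g (ic - Nat.succ j)) =
      (fun t j => t.g (ic - 1 - j)) := by
    funext t j
    congr 1
    omega
  rw [hf]
  congr 1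

lemma main_aux : ∀ (ic : ℕ) {n : ℕ} (m m' : SYT n), ¬ Crossing m m' →
    0 < ic → ic < n → m.d ic ≠ m'.d ic → (∀ j < ic, m.d j = m'.d j) →
    (((m.g ic).d (ic - 1) ≠ (m'.g ic).d (ic - 1) ∧
      ∀ j < ic - 1, (m.g ic).d j = (m'.g ic).d j) ∧
    ∃ k : ℕ, Crossing ((List.range k).foldl (fun t j => t.g (ic - j)) m)
      ((List.range k).foldl (fun t j => t.g (ic - j)) m')) := by
  intro ic
  induction ic using Nat.strong_induction_on with
  | _ ic IH =>
  intro n m m' hbr h0 hn hcut hmin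
  have hone : (|m.d ic| ≠ 1 ∧ |m'.d ic| = 1) ∨ (|m.d ic| = 1 ∧ |m'.d ic| ≠ 1) := by
    by_contra hc
    exact hbr ⟨ic, h0, hn, hcut, by tauto⟩
  have F : (m.g ic).d (ic - 1) ≠ (m'.g ic).d (ic - 1) ∧
      (∀ j < ic - 1, (m.g ic).d j = (m'.g ic).d j) ∧ 2 ≤ ic := by
    rcases hone with ⟨h1, h2⟩ | ⟨h1, h2⟩
    · obtain ⟨hi2, hne, hall⟩ := step h0 hn h1 h2 hmin
      exact ⟨hne, hall, hi2⟩
    · obtain ⟨hi2, hne, hall⟩ := step h0 hn h2 h1 (fun j hj => (hmin j hj).symm)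
      exact ⟨hne.symm, fun j hj => (hall j hj).symm, hi2⟩
  refine ⟨⟨F.1, F.2.1⟩, ?_⟩
  by_cases hcr : Crossing (m.g ic) (m'.g ic)
  · refine ⟨1, ?_⟩
    simpa using hcr
  · obtain ⟨-, k, hk⟩ := IH (ic - 1) (by omega) (m.g ic) (m'.g ic) hcr (by omega) (by omega)
      F.1 F.2.1
    refine ⟨k + 1, ?_⟩
    rw [foldl_shift, foldl_shift]
    exact hk

end SYT

/-- For a bridge pair with cut `ic`, applying the swap `g_ic` to both tableaux
strictly decreases the cut to `ic - 1`; consequently iterating the swaps at the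
successive cuts eventually produces a crossing pair. -/
theorem bridge_cut_decreases (n : ℕ) (m m' : SYT n) (hne : m ≠ m')
    (hshape : m.shape = m'.shape) (hbridge : ¬ Crossing m m')
    (ic : ℕ) (h0 : 0 < ic) (hn : ic < n)
    (hcut : m.d ic ≠ m'.d ic) (hmin : ∀ j < ic, m.d j = m'.d j) :
    ((m.g ic).d (ic - 1) ≠ (m'.g ic).d (ic - 1) ∧
      ∀ j < ic - 1, (m.g ic).d j = (m'.g ic).d j) ∧
    ∃ k : ℕ, Crossing
      ((List.range k).foldl (fun t j => t.g (ic - j)) m)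
      ((List.range k).foldl (fun t j => t.g (ic - j)) m') := by
  exact SYT.main_aux ic m m' hbridge h0 hn hcut hmin
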